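/- Let T be a lobster on at least 4 vertices with a perfect matching given by the edge set M, where M is exactly the set of end edges of T, and let P = v₀, v₁, …, v_p be a path in T of maximal length such that every vertex of T is at distance at most 2 from some vertex of P. Then v₁ has degree 2 in T. -/

import Mathlib

open SimpleGraph

/-- A graceful labelling of a graph `G` with `m` edges: an injective function
`f` from the vertices into `{0, 1, …, m}` such that the induced edge labels
`|f u − f v|` are pairwise distinct over the edges. -/
def IsGracefulLabeling {V : Type} (G : SimpleGraph V) (f : V → ℕ) : Prop :=
  Function.Injective f ∧ (∀ v, f v ≤ G.edgeSet.ncard) ∧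
  ∀ u v x y : V, G.Adj u v → G.Adj x y →
    Nat.dist (f u) (f v) = Nat.dist (f x) (f y) → s(u, v) = s(x, y)

/-- A strong graceful labelling of `G` on `n` vertices with respect to a matching `M`:
a graceful labelling such that `f x + f y = n - 1` for every edge `xy ∈ M`. -/
def IsStrongGracefulLabeling {V : Type} [Fintype V] (G : SimpleGraph V)
    (M : G.Subgraph) (f : V → ℕ) : Prop :=
  IsGracefulLabeling G f ∧ ∀ x y : V, M.Adj x y → f x + f y = Fintype.card V - 1


/-- An end edge of `G`: an edge incident with a vertex of degree 1. -/
def IsEndEdge {V : Type} (G : SimpleGraph V) (e : Sym2 V) : Prop :=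
  e ∈ G.edgeSet ∧ ∃ x ∈ e, (G.neighborSet x).ncard = 1

/-- `v 0, v 1, …, v p` is a path in `G` (injective on indices `≤ p`, consecutive
vertices adjacent) such that every vertex of `G` is at distance at most `k` from
some vertex of the path, and the path has maximal length among all such paths. -/
def IsMaxDomPath {V : Type} (G : SimpleGraph V) (k p : ℕ) (v : ℕ → V) : Prop :=
  (∀ i ≤ p, ∀ j ≤ p, v i = v j → i = j) ∧
  (∀ i < p, G.Adj (v i) (v (i + 1))) ∧
  (∀ w, ∃ i ≤ p, G.dist w (v i) ≤ k) ∧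
  ∀ (q : ℕ) (u : ℕ → V), (∀ i ≤ q, ∀ j ≤ q, u i = u j → i = j) →
    (∀ i < q, G.Adj (u i) (u (i + 1))) →
    (∀ w, ∃ i ≤ q, G.dist w (u i) ≤ k) → q ≤ p

/-- In a lobster `T` on at least 4 vertices whose set of end edges is a perfect matching
`M`, if `P = v 0, …, v p` is a maximal path such that every vertex is at distance at
most 2 from `P`, then `v 1` has degree 2. -/
lemma chain_walk {V : Type} (G : SimpleGraph V) (v : ℕ → V) :
    ∀ (k a b : ℕ), b = a + k → (∀ i, a ≤ i → i < a + k → G.Adj (v i) (v (i+1))) →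
    ∃ W : G.Walk (v a) (v b), W.length = k ∧
      W.support = (List.range (k+1)).map (fun t => v (a + t)) := by
  intro k
  induction k with
  | zero =>
    intro a b hb _
    subst hb
    exact ⟨Walk.nil, by simp, by simp [List.range_succ]⟩
  | succ k ih =>
    intro a b hb hadj
    obtain ⟨W, hlen, hsup⟩ := ih (a+1) b (by omega) (fun i h1 h2 => hadj i (by omega) (by omega))
    have hadj0 : G.Adj (v a) (v (a+1)) := hadj a le_rfl (by omega)
    refine ⟨Walk.cons hadj0 W, by simp [hlen], ?_⟩
    rw [Walk.support_cons, hsup]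
    conv_rhs => rw [List.range_succ_eq_map]
    simp only [List.map_cons, List.map_map]
    congr 1
    · refine List.map_congr_left fun t _ => ?_
      show v (a+1+t) = v (a + (t+1))
      congr 1
      omega

lemma chain_dist {V : Type} {G : SimpleGraph V} (hT : G.IsTree) {p : ℕ} {v : ℕ → V}
    (hinj : ∀ i ≤ p, ∀ j ≤ p, v i = v j → i = j)
    (hadj : ∀ i < p, G.Adj (v i) (v (i + 1))) :
    ∀ j k, j ≤ k → k ≤ p → G.dist (v j) (v k) = k - j := by
  intro j k hjk hkp
  obtain ⟨W, hlen, hsup⟩ := chain_walk G v (k - j) j k (by omega)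
    (fun i h1 h2 => hadj i (by omega))
  have hWpath : W.IsPath := by
    rw [Walk.isPath_def, hsup]
    refine List.Nodup.map_on ?_ List.nodup_range
    intro x hx y hy hxy
    simp only [List.mem_range] at hx hy
    have := hinj (j + x) (by omega) (j + y) (by omega) hxy
    omega
  obtain ⟨S, hSpath, hSlen⟩ := (hT.isConnected (v j) (v k)).exists_path_of_dist
  have h1 := hT.IsAcyclic.path_unique ⟨W, hWpath⟩ ⟨S, hSpath⟩
  have h2 : W = S := congrArg Subtype.val h1
  rw [← h2] at hSlen
  omega

lemma leaf_dist_lt {V : Type} {G : SimpleGraph V} (hc : G.Connected) {a b x : V}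
    (hnb : ∀ z, G.Adj a z → z = b) (hx : x ≠ a) :
    G.dist x b < G.dist x a := by
  obtain ⟨W, hWp, hWlen⟩ := (hc x a).exists_path_of_dist
  have hWr : W.reverse.length = W.length := Walk.length_reverse W
  cases hq : W.reverse with
  | nil => exact absurd rfl hx
  | cons h q =>
    rename_i y
    have hyb : y = b := hnb y h
    rw [← hyb]
    have hd : G.dist x y ≤ q.length := by
      rw [SimpleGraph.dist_comm]
      exact dist_le q
    have hlen2 : q.length + 1 = W.length := by
      rw [← hWr, hq]; simp
    omega

lemma rev_max {V : Type} {G : SimpleGraph V} {k p : ℕ} {v : ℕ → V}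
    (hP : IsMaxDomPath G k p v) : IsMaxDomPath G k p (fun i => v (p - i)) := by
  obtain ⟨hinj, hadj, hdom, hmax⟩ := hP
  refine ⟨?_, ?_, ?_, hmax⟩
  · intro i hi j hj hij
    have := hinj (p - i) (by omega) (p - j) (by omega) hij
    omega
  · intro i hi
    show G.Adj (v (p - i)) (v (p - (i+1)))
    have h := hadj (p - i - 1) (by omega)
    rw [show p - i - 1 + 1 = p - i by omega] at h
    rw [show p - (i+1) = p - i - 1 by omega]
    exact h.symm
  · intro w
    obtain ⟨i, hi, hd⟩ := hdom w
    exact ⟨p - i, by omega, by simpa [show p - (p - i) = i by omega] using hd⟩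

lemma prepend_false {V : Type} {G : SimpleGraph V} {k p : ℕ} {v : ℕ → V}
    (hP : IsMaxDomPath G k p v) {y : V} (hadjy : G.Adj y (v 0))
    (hy : ∀ i ≤ p, y ≠ v i) : False := by
  obtain ⟨hinj, hadj, hdom, hmax⟩ := hP
  set u : ℕ → V := fun j => if j = 0 then y else v (j - 1) with hu
  have h1 : ∀ i ≤ p + 1, ∀ j ≤ p + 1, u i = u j → i = j := by
    intro i hi j hj hij
    by_cases hi0 : i = 0 <;> by_cases hj0 : j = 0
    · omega
    · subst hi0
      simp only [hu, if_pos rfl, if_neg hj0] at hij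
      exact absurd hij (hy (j-1) (by omega))
    · subst hj0
      simp only [hu, if_pos rfl, if_neg hi0] at hij
      exact absurd hij.symm (hy (i-1) (by omega))
    · simp only [hu, if_neg hi0, if_neg hj0] at hij
      have := hinj (i-1) (by omega) (j-1) (by omega) hij
      omega
  have h2 : ∀ i < p + 1, G.Adj (u i) (u (i + 1)) := by
    intro i hi
    by_cases hi0 : i = 0
    · subst hi0
      simpa [hu] using hadjy
    · have h := hadj (i-1) (by omega)
      rw [show i - 1 + 1 = i by omega] at h
      have e1 : u i = v (i-1) := by simp [hu, hi0]
      have e2 : u (i+1) = v i := by simp [hu]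
      rw [e1, e2]
      exact h
  have h3 : ∀ w, ∃ i ≤ p + 1, G.dist w (u i) ≤ k := by
    intro w
    obtain ⟨i, hip, hd⟩ := hdom w
    refine ⟨i + 1, by omega, ?_⟩
    have : u (i+1) = v i := by simp [hu]
    rwa [this]
  have := hmax (p+1) u h1 h2 h3
  omega

lemma nbr_v0 {V : Type} {G : SimpleGraph V} (hT : G.IsTree) {p : ℕ} {v : ℕ → V}
    (hP : IsMaxDomPath G 2 p v) :
    ∀ y, G.Adj (v 0) y → y = v 1 := by
  intro y hy
  by_cases hmem : ∃ i ≤ p, y = v i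
  · obtain ⟨i, hip, rfl⟩ := hmem
    have hd : G.dist (v 0) (v i) ≤ 1 := by
      simpa using dist_le (Walk.cons hy Walk.nil)
    have hdist := chain_dist hT hP.1 hP.2.1 0 i (by omega) hip
    have hi0 : i ≠ 0 := by rintro rfl; exact G.irrefl hy
    have : i = 1 := by omega
    rw [this]
  · push_neg at hmem
    exact (prepend_false hP hy.symm hmem).elim

theorem lobster_spine_second_vertex {V : Type} [Fintype V] (G : SimpleGraph V)
    (hT : G.IsTree) (hcard : 4 ≤ Fintype.card V)
    (M : G.Subgraph) (hM : M.IsPerfectMatching)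
    (hMend : ∀ e, e ∈ M.edgeSet ↔ IsEndEdge G e)
    (p : ℕ) (v : ℕ → V) (hP : IsMaxDomPath G 2 p v) :
    (G.neighborSet (v 1)).ncard = 2 := by
  classical
  have hconn := hT.isConnected
  -- p ≥ 1
  have hp1 : 1 ≤ p := by
    by_contra h
    have hp0 : p = 0 := by omega
    obtain ⟨x, hx⟩ := Fintype.exists_ne_of_one_lt_card (by omega) (v 0)
    obtain ⟨W, hWp, hWlen⟩ := (hconn x (v 0)).exists_path_of_dist
    cases hq : W.reverse with
    | nil => exact hx rfl
    | cons h q =>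
      rename_i y
      refine prepend_false hP h.symm ?_
      intro i hi
      have hi0 : i = 0 := by omega
      subst hi0
      intro he
      exact G.irrefl (he ▸ h)
  have hnb0 : ∀ z, G.Adj (v 0) z → z = v 1 := nbr_v0 hT hP
  -- p ≥ 2
  have hp2 : 2 ≤ p := by
    by_contra h
    have hp : p = 1 := by omega
    have hPr := rev_max hP
    have hnb1 : ∀ z, G.Adj (v 1) z → z = v 0 := by
      intro z hz
      have h' := nbr_v0 hT hPr z (by simpa [hp] using hz)
      simpa [hp] using h'
    have hall : ∀ x : V, x = v 0 ∨ x = v 1 := by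
      intro x
      by_contra hx
      push_neg at hx
      have h1 := leaf_dist_lt hconn hnb0 hx.1
      have h2 := leaf_dist_lt hconn hnb1 hx.2
      omega
    have hsub : (Finset.univ : Finset V) ⊆ {v 0, v 1} := by
      intro x _
      rcases hall x with rfl | rfl <;> simp
    have hle := Finset.card_le_card hsub
    have h2 : ({v 0, v 1} : Finset V).card ≤ 2 :=
      (Finset.card_insert_le _ _).trans (by simp)
    rw [Finset.card_univ] at hle
    omega
  -- basic adjacencies
  have hadj01 : G.Adj (v 0) (v 1) := hP.2.1 0 (by omega)
  have hadj12 : G.Adj (v 1) (v 2) := hP.2.1 1 (by omega)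
  have h02 : v 0 ≠ v 2 := fun h => by
    have := hP.1 0 (by omega) 2 (by omega) h
    omega
  -- matching facts
  have hmatch : ∀ x : V, ∃! y, M.Adj x y := fun x => hM.1 (hM.2 x)
  have hMuniq : ∀ x y z : V, M.Adj x y → M.Adj x z → y = z := by
    intro x y z h1 h2
    obtain ⟨a, _, ha⟩ := hmatch x
    rw [ha y h1, ha z h2]
  have hleaf0 : (G.neighborSet (v 0)).ncard = 1 := by
    have hset : G.neighborSet (v 0) = {v 1} := by
      ext z
      simp only [mem_neighborSet, Set.mem_singleton_iff]
      exact ⟨hnb0 z, fun h => h ▸ hadj01⟩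
    rw [hset]
    exact Set.ncard_singleton _
  have hM01 : M.Adj (v 0) (v 1) := by
    rw [← Subgraph.mem_edgeSet, hMend]
    exact ⟨G.mem_edgeSet.mpr hadj01, ⟨v 0, Sym2.mem_iff.mpr (Or.inl rfl), hleaf0⟩⟩
  -- the key claim
  have hnb1 : ∀ w, G.Adj (v 1) w → w = v 0 ∨ w = v 2 := by
    intro w hw
    by_contra hcon
    push_neg at hcon
    obtain ⟨hw0, hw2⟩ := hcon
    have hwv : ∀ i ≤ p, w ≠ v i := by
      intro i hip he
      by_cases h0 : i = 0
      · exact hw0 (h0 ▸ he)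
      by_cases h1 : i = 1
      · subst h1
        rw [he] at hw
        exact G.irrefl hw
      by_cases h2 : i = 2
      · exact hw2 (h2 ▸ he)
      have hdist := chain_dist hT hP.1 hP.2.1 1 i (by omega) hip
      rw [he] at hw
      have hd : G.dist (v 1) (v i) ≤ 1 := by
        simpa using dist_le (Walk.cons hw Walk.nil)
      omega
    have hwnl : (G.neighborSet w).ncard ≠ 1 := by
      intro hl
      have hMw : M.Adj (v 1) w := by
        rw [← Subgraph.mem_edgeSet, hMend]
        exact ⟨G.mem_edgeSet.mpr hw, ⟨w, Sym2.mem_iff.mpr (Or.inr rfl), hl⟩⟩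
      exact hw0 (hMuniq (v 1) w (v 0) hMw hM01.symm)
    obtain ⟨w', hww', -⟩ := hmatch w
    obtain ⟨hGe, x, hxmem, hxleaf⟩ := (hMend s(w, w')).mp hww'
    have hGww' : G.Adj w w' := G.mem_edgeSet.mp hGe
    have hxw' : x = w' := by
      rcases Sym2.mem_iff.mp hxmem with rfl | rfl
      · exact absurd hxleaf hwnl
      · rfl
    subst hxw'
    obtain ⟨a, ha⟩ := Set.ncard_eq_one.mp hxleaf
    have haw : a = w := by
      have hmem : w ∈ G.neighborSet x := hGww'.symm
      rw [ha, Set.mem_singleton_iff] at hmem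
      exact hmem.symm
    rw [haw] at ha
    have hnbw' : ∀ z, G.Adj x z → z = w := by
      intro z hz
      have : z ∈ G.neighborSet x := hz
      rwa [ha, Set.mem_singleton_iff] at this
    have hw'w : x ≠ w := fun h => G.irrefl (by rw [h] at hGww'; exact hGww')
    -- build the longer path
    set u : ℕ → V := fun j => if j = 0 then x else if j = 1 then w else v (j - 1) with hu
    have key : ∀ j, 2 ≤ j → u j = v (j-1) := by
      intro j hj
      have h0 : ¬(j = 0) := by omega
      have h1 : ¬(j = 1) := by omega
      simp only [hu, if_neg h0, if_neg h1]
    have hu0 : u 0 = x := by simp [hu]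
    have hu1 : u 1 = w := by simp [hu]
    have h1 : ∀ i ≤ p+1, ∀ j ≤ p+1, u i = u j → i = j := by
      have main : ∀ i, ∀ j ≤ p+1, i < j → u i ≠ u j := by
        intro i j hj hij he
        by_cases i0 : i = 0
        · subst i0
          rw [hu0] at he
          by_cases j1 : j = 1
          · rw [j1, hu1] at he
            exact hw'w he
          · rw [key j (by omega)] at he
            have hadjj : G.Adj (v (j-2)) (v (j-1)) := by
              have := hP.2.1 (j-2) (by omega)
              rwa [show j - 2 + 1 = j - 1 by omega] at this
            rw [← he] at hadjj
            have := hnbw' (v (j-2)) hadjj.symm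
            exact hwv (j-2) (by omega) this.symm
        by_cases i1 : i = 1
        · subst i1
          rw [hu1, key j (by omega)] at he
          exact hwv (j-1) (by omega) he
        · rw [key i (by omega), key j (by omega)] at he
          have := hP.1 (i-1) (by omega) (j-1) (by omega) he
          omega
      intro i hi j hj hij
      rcases lt_trichotomy i j with h | h | h
      · exact absurd hij (main i j hj h)
      · exact h
      · exact absurd hij.symm (main j i hi h)
    have h2 : ∀ i < p+1, G.Adj (u i) (u (i+1)) := by
      intro i hi
      by_cases i0 : i = 0
      · subst i0
        rw [hu0, hu1]
        exact hGww'.symm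
      by_cases i1 : i = 1
      · subst i1
        rw [hu1, key 2 le_rfl]
        exact hw.symm
      · rw [key i (by omega), key (i+1) (by omega), show i + 1 - 1 = i by omega]
        have := hP.2.1 (i-1) (by omega)
        rwa [show i - 1 + 1 = i by omega] at this
    have h3 : ∀ x', ∃ j ≤ p+1, G.dist x' (u j) ≤ 2 := by
      intro x'
      obtain ⟨i, hip, hd⟩ := hP.2.2.1 x'
      by_cases i0 : i = 0
      · subst i0
        refine ⟨2, by omega, ?_⟩
        rw [key 2 le_rfl, show (2:ℕ) - 1 = 1 from rfl]
        by_cases hx : x' = v 0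
        · subst hx
          have : G.dist (v 0) (v 1) ≤ 1 := by
            simpa using dist_le (Walk.cons hadj01 Walk.nil)
          omega
        · have := leaf_dist_lt hconn hnb0 hx
          omega
      · refine ⟨i+1, by omega, ?_⟩
        rw [key (i+1) (by omega), show i + 1 - 1 = i by omega]
        exact hd
    have := hP.2.2.2 (p+1) u h1 h2 h3
    omega
  have hset : G.neighborSet (v 1) = {v 0, v 2} := by
    ext z
    simp only [mem_neighborSet, Set.mem_insert_iff, Set.mem_singleton_iff]
    constructor
    · exact hnb1 z
    · rintro (rfl | rfl)
      · exact hadj01.symm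
      · exact hadj12
  rw [hset, Set.ncard_pair h02]
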